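/- If P is a convex lattice polygon with lattice diameter equal to 1 (i.e., no 3 collinear lattice points in P), then P contains at most 4 lattice points. -/

import Mathlib

/-- The canonical embedding of `ℤ × ℤ` into `ℝ × ℝ`. -/
noncomputable def latticeCast (p : ℤ × ℤ) : ℝ × ℝ := ((p.1 : ℝ), (p.2 : ℝ))

theorem lattice_diameter_one_at_most_four_points (V : Finset (ℤ × ℤ))
    (P : Set (ℝ × ℝ)) (hP : P = convexHull ℝ (latticeCast '' (V : Set (ℤ × ℤ))))
    (h2dim : ¬ Collinear ℝ (latticeCast '' (V : Set (ℤ × ℤ))))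
    (hld : ∀ r s t : ℤ × ℤ, latticeCast r ∈ P → latticeCast s ∈ P → latticeCast t ∈ P →
      r ≠ s → r ≠ t → s ≠ t →
      ¬ Collinear ℝ ({latticeCast r, latticeCast s, latticeCast t} : Set (ℝ × ℝ))) :
    {r : ℤ × ℤ | latticeCast r ∈ P}.ncard ≤ 4 := by
  classical
  by_contra h
  push_neg at h
  set S := {r : ℤ × ℤ | latticeCast r ∈ P} with hS
  have hfin : S.Finite := by
    by_contra hinf
    rw [Set.Infinite.ncard (by simpa using hinf)] at h
    omega
  have h5 : 4 < hfin.toFinset.card := by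
    rwa [Set.ncard_eq_toFinset_card S hfin] at h
  -- pigeonhole on parity classes
  have hcard : (Finset.univ : Finset (ZMod 2 × ZMod 2)).card < hfin.toFinset.card := by
    simpa using h5
  obtain ⟨r, hr, s, hs, hrs, hfeq⟩ :=
    Finset.exists_ne_map_eq_of_card_lt_of_maps_to hcard
      (f := fun p : ℤ × ℤ => ((p.1 : ZMod 2), (p.2 : ZMod 2)))
      (fun a _ => Finset.mem_univ _)
  rw [Set.Finite.mem_toFinset] at hr hs
  have h1 : (2 : ℤ) ∣ r.1 + s.1 := by
    have := (ZMod.intCast_eq_intCast_iff' r.1 s.1 2).mp (congrArg Prod.fst hfeq)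
    have := this.dvd
    omega
  have h2 : (2 : ℤ) ∣ r.2 + s.2 := by
    have := (ZMod.intCast_eq_intCast_iff' r.2 s.2 2).mp (congrArg Prod.snd hfeq)
    have := this.dvd
    omega
  obtain ⟨a, ha⟩ := h1
  obtain ⟨b, hb⟩ := h2
  set m : ℤ × ℤ := (a, b) with hm
  have hmr : r ≠ m := by
    intro he
    apply hrs
    have ha1 : r.1 = a := congrArg Prod.fst he
    have hb1 : r.2 = b := congrArg Prod.snd he
    have : r.1 = s.1 := by omega
    have : r.2 = s.2 := by omega
    exact Prod.ext (by omega) (by omega)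
  have hms : m ≠ s := by
    intro he
    apply hrs
    have ha1 : a = s.1 := congrArg Prod.fst he
    have hb1 : b = s.2 := congrArg Prod.snd he
    exact Prod.ext (by omega) (by omega)
  -- the midpoint
  have hmid : latticeCast m =
      AffineMap.lineMap (latticeCast r) (latticeCast s) (1/2 : ℝ) := by
    have ha' : (a : ℝ) = ((r.1 : ℝ) + (s.1 : ℝ)) / 2 := by
      have : ((r.1 + s.1 : ℤ) : ℝ) = ((2 * a : ℤ) : ℝ) := by rw [ha]
      push_cast at this
      linarith
    have hb' : (b : ℝ) = ((r.2 : ℝ) + (s.2 : ℝ)) / 2 := by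
      have : ((r.2 + s.2 : ℤ) : ℝ) = ((2 * b : ℤ) : ℝ) := by rw [hb]
      push_cast at this
      linarith
    apply Prod.ext
    · simp [latticeCast, AffineMap.lineMap_apply, ha', Prod.smul_def]
      simp only [hm, ha']
      ring
    · simp [latticeCast, AffineMap.lineMap_apply, hb', Prod.smul_def]
      simp only [hm, hb']
      ring
  have hmP : latticeCast m ∈ P := by
    have hconv : Convex ℝ P := by rw [hP]; exact convex_convexHull ℝ _
    rw [hmid, AffineMap.lineMap_apply_module]
    exact hconv hr hs (by norm_num) (by norm_num) (by norm_num)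
  have hcol : Collinear ℝ ({latticeCast r, latticeCast m, latticeCast s} : Set (ℝ × ℝ)) := by
    have : Collinear ℝ ({latticeCast m, latticeCast r, latticeCast s} : Set (ℝ × ℝ)) :=
      collinear_insert_of_mem_affineSpan_pair
        (hmid ▸ AffineMap.lineMap_mem_affineSpan_pair _ _ _)
    rwa [Set.insert_comm] at this
  exact hld r m s hr hmP hs hmr hrs hms hcol
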